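/- arXiv:2410.13796 — 4 statements merged into one kernel-verified Lean document; each statement's English description precedes it below -/
import Mathlib

section
/- The sorted vector of distances from a point to its k nearest neighbors is stable under perturbation: if every point of a finite set Q ⊂ ℝⁿ is moved by at most ε to form S (via a bijection f with |q - f(q)| ≤ ε for all q), then for each q ∈ Q the i-th smallest distance from q to other points of Q and the i-th smallest distance from f(q) to other points of S differ by at most 2ε, for all i = 1,…,k. -/
attribute [local instance] Classical.propDecidable
/-- The nondecreasing list of distances from `p` to the points of `T \ {p}`. -/
noncomputable def sortedDists {X : Type*} [MetricSpace X] [DecidableEq X]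
    (T : Finset X) (p : X) : List ℝ :=
  ((T.erase p).val.map (dist p)).sort (· ≤ ·)

lemma sorted_rel_aux (δ : ℝ) : ∀ N : ℕ, ∀ s t : Multiset ℝ, Multiset.card s ≤ N →
    Multiset.Rel (fun x y => |x - y| ≤ δ) s t →
    List.Forall₂ (fun x y => |x - y| ≤ δ) (s.sort (· ≤ ·)) (t.sort (· ≤ ·)) := by
  intro N
  induction N with
  | zero =>
    intro s t hcard hrel
    have hs : s = 0 := by
      rwa [Nat.le_zero, Multiset.card_eq_zero] at hcard
    subst hs
    have ht : t = 0 := Multiset.rel_zero_left.mp hrel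
    subst ht
    simp [Multiset.sort_zero]
  | succ N ih =>
    intro s t hcard hrel
    rcases h : s.sort (· ≤ ·) with _ | ⟨a, l'⟩
    · have hs : s = 0 := by
        have := Multiset.sort_eq s (· ≤ ·)
        rw [h] at this
        simpa using this.symm
      subst hs
      have ht : t = 0 := Multiset.rel_zero_left.mp hrel
      subst ht
      simp [Multiset.sort_zero]
    · have hsort := Multiset.pairwise_sort s (· ≤ ·)
      rw [h] at hsort
      rw [List.pairwise_cons] at hsort
      obtain ⟨hamin, hl'sorted⟩ := hsort
      have hs : s = a ::ₘ ↑l' := by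
        have := Multiset.sort_eq s (· ≤ ·)
        rw [h] at this
        exact this.symm
      rw [hs] at hrel
      obtain ⟨b₁, t₁, hab₁, hrel₁, ht⟩ := Multiset.rel_cons_left.mp hrel
      -- minimum b of t
      rcases h2 : t.sort (· ≤ ·) with _ | ⟨b, m'⟩
      · exfalso
        have ht0 : t = 0 := by
          have := Multiset.sort_eq t (· ≤ ·)
          rw [h2] at this
          simpa using this.symm
        rw [ht0] at ht
        exact Multiset.cons_ne_zero ht.symm
      · have htsort := Multiset.pairwise_sort t (· ≤ ·)
        rw [h2] at htsort
        rw [List.pairwise_cons] at htsort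
        obtain ⟨hbmin, hm'sorted⟩ := htsort
        have ht2 : t = b ::ₘ ↑m' := by
          have := Multiset.sort_eq t (· ≤ ·)
          rw [h2] at this
          exact this.symm
        have hbmin' : ∀ y ∈ t, b ≤ y := by
          intro y hy
          rw [ht2, Multiset.mem_cons] at hy
          rcases hy with rfl | hy
          · rfl
          · exact hbmin y (by exact_mod_cast hy)
        have hbmem : b ∈ t := by rw [ht2]; exact Multiset.mem_cons_self _ _
        -- produce t' with t = b ::ₘ t', R a b, Rel l' t'
        have key : ∃ t' : Multiset ℝ, t = b ::ₘ t' ∧ |a - b| ≤ δ ∧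
            Multiset.Rel (fun x y => |x - y| ≤ δ) (↑l') t' := by
          rw [ht] at hbmem
          rcases Multiset.mem_cons.mp hbmem with rfl | hbt₁
          · exact ⟨t₁, ht, hab₁, hrel₁⟩
          · have ht₁ : t₁ = b ::ₘ t₁.erase b := (Multiset.cons_erase hbt₁).symm
            rw [ht₁] at hrel₁
            obtain ⟨a₁, s₁, ha₁b, hrel₂, hl'⟩ := Multiset.rel_cons_right.mp hrel₁
            have ha₁mem : a₁ ∈ (↑l' : Multiset ℝ) := by
              rw [hl']; exact Multiset.mem_cons_self _ _
            have haa₁ : a ≤ a₁ := hamin a₁ (by exact_mod_cast ha₁mem)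
            have hbb₁ : b ≤ b₁ := hbmin' b₁ (by rw [ht]; exact Multiset.mem_cons_self _ _)
            rw [abs_sub_le_iff] at hab₁ ha₁b ⊢
            refine ⟨b₁ ::ₘ t₁.erase b, ?_, ⟨?_, ?_⟩, ?_⟩
            · conv_lhs => rw [ht, ht₁]
              rw [Multiset.cons_swap]
            · linarith [ha₁b.1]
            · linarith [hab₁.2]
            · rw [hl']
              refine Multiset.Rel.cons ?_ hrel₂
              rw [abs_sub_le_iff]
              constructor
              · linarith [ha₁b.1]
              · linarith [hab₁.2]
        obtain ⟨t', ht', hab, hrel'⟩ := key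
        have hsortl' : (↑l' : Multiset ℝ).sort (· ≤ ·) = l' := by
          change Multiset.sort _ _ = _
          rw [Multiset.coe_sort]
          exact List.mergeSort_eq_self _ hl'sorted
        have hsortt : t.sort (· ≤ ·) = b :: t'.sort (· ≤ ·) := by
          rw [ht', Multiset.sort_cons]
          intro y hy
          exact hbmin' y (by rw [ht']; exact Multiset.mem_cons_of_mem hy)
        have hcard' : Multiset.card (↑l' : Multiset ℝ) ≤ N := by
          have : Multiset.card s = Multiset.card (↑l' : Multiset ℝ) + 1 := by
            rw [hs]; simp
          omega
        have hm' : m' = t'.sort (· ≤ ·) := by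
          rw [h2] at hsortt
          exact (List.cons_eq_cons.mp hsortt).2
        rw [hm']
        exact List.Forall₂.cons hab (by simpa [hsortl'] using ih (↑l') t' hcard' hrel')

/-- Stability of sorted neighbor distances: if every point of a finite set `Q ⊂ ℝⁿ` is moved
by at most `ε` (via a map `f` injective on `Q`, with image `S`), then for each `q ∈ Q` and each
`i < k`, the `i`-th smallest distance from `q` to the other points of `Q` and the `i`-th smallest
distance from `f q` to the other points of `S` differ by at most `2ε`. -/
theorem sorted_dists_perturbation_stability {n : ℕ}
    (Q : Finset (EuclideanSpace ℝ (Fin n))) (k : ℕ) (hk : k + 1 ≤ Q.card)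
    (f : EuclideanSpace ℝ (Fin n) → EuclideanSpace ℝ (Fin n))
    (hf : Set.InjOn f ↑Q) (S : Finset (EuclideanSpace ℝ (Fin n))) (hS : S = Q.image f)
    (ε : ℝ) (hε : 0 ≤ ε) (hmove : ∀ q ∈ Q, dist q (f q) ≤ ε) :
    ∀ q ∈ Q, ∀ i < k, |(sortedDists Q q)[i]! - (sortedDists S (f q))[i]!| ≤ 2 * ε := by
  intro q hq i hik
  set M : Multiset (EuclideanSpace ℝ (Fin n)) := Q.val.erase q with hM
  have hqval : q ∈ Q.val := hq
  have hQv : Q.val = q ::ₘ M := (Multiset.cons_erase hqval).symm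
  have hnodup : (Q.val.map f).Nodup :=
    Q.nodup.map_on (fun x hx y hy hxy => hf hx hy hxy)
  have hSv : S.val = Q.val.map f := by
    rw [hS, Finset.image_val, Multiset.dedup_eq_self.mpr hnodup]
  have hSe : (S.erase (f q)).val = M.map f := by
    rw [Finset.erase_val, hSv, hQv, Multiset.map_cons, Multiset.erase_cons_head]
  have hMe : (Q.erase q).val = M := Finset.erase_val Q q
  have hrel : Multiset.Rel (fun x y => |x - y| ≤ 2 * ε)
      (M.map (dist q)) ((M.map f).map (dist (f q))) := by
    rw [Multiset.map_map, Multiset.rel_map]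
    refine Multiset.rel_refl_of_refl_on ?_
    intro p hp
    have hpQ : p ∈ Q := Multiset.mem_of_mem_erase hp
    have h1 : |dist q p - dist (f q) p| ≤ dist q (f q) := abs_dist_sub_le _ _ _
    have h2 : |dist (f q) p - dist (f q) (f p)| ≤ dist p (f p) := by
      rw [dist_comm (f q) p, dist_comm (f q) (f p)]
      exact abs_dist_sub_le _ _ _
    have hmq := hmove q hq
    have hmp := hmove p hpQ
    calc |dist q p - (dist (f q) ∘ f) p|
        ≤ |dist q p - dist (f q) p| + |dist (f q) p - dist (f q) (f p)| := abs_sub_le _ _ _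
      _ ≤ 2 * ε := by linarith
  have hfa := sorted_rel_aux (2 * ε) (Multiset.card (M.map (dist q)))
      (M.map (dist q)) ((M.map f).map (dist (f q))) le_rfl hrel
  have hlen1 : (sortedDists Q q).length = Multiset.card M := by
    rw [sortedDists, hMe, Multiset.length_sort, Multiset.card_map]
  have hlen2 : (sortedDists S (f q)).length = Multiset.card M := by
    rw [sortedDists, hSe, Multiset.length_sort, Multiset.map_map, Multiset.card_map]
  have hcardM : Multiset.card M = Q.card - 1 := by
    rw [hM, Multiset.card_erase_of_mem hqval]; rfl
  have hi : i < Multiset.card M := by omega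
  have hi1 : i < (sortedDists Q q).length := by omega
  have hi2 : i < (sortedDists S (f q)).length := by omega
  rw [getElem!_pos (sortedDists Q q) i hi1, getElem!_pos (sortedDists S (f q)) i hi2]
  have heq1 : sortedDists Q q = (M.map (dist q)).sort (· ≤ ·) := by rw [sortedDists, hMe]
  have heq2 : sortedDists S (f q) = ((M.map f).map (dist (f q))).sort (· ≤ ·) := by
    rw [sortedDists, hSe]
  have := (List.forall₂_iff_get.mp hfa).2 i (by simp [← heq1] at hi1 ⊢; omega)
      (by rw [Multiset.length_sort, Multiset.map_map, Multiset.card_map]; omega)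
  simpa [heq1, heq2, List.get_eq_getElem] using this
end

section
/- Local Novelty Distance upper bound (Theorem 1, first part, finite version): let D be a finite dataset of finite point sets in ℝⁿ, each with m points, and define LND(S; D) = min over Q ∈ D of EMD between the distributions of sorted k-nearest-neighbor distance vectors (with uniform weights 1/m). If S is obtained from some Q ∈ D by perturbing every point by at most ε, where 2ε is less than the minimum inter-point distance of Q, then LND(S; D) ≤ 2ε. -/
attribute [local instance] Classical.propDecidable

private lemma countP_take_ge {l : List ℝ} (hl : l.Pairwise (· ≤ ·)) {i : ℕ}
    (hi : i < l.length) : i + 1 ≤ l.countP (fun y => decide (y ≤ l[i])) := by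
  have hpref : l.take (i+1) <+: l := List.take_prefix _ _
  have hall : (l.take (i+1)).countP (fun y => decide (y ≤ l[i])) = (l.take (i+1)).length := by
    rw [List.countP_eq_length]
    intro y hy
    obtain ⟨j, hj, rfl⟩ := List.getElem_of_mem hy
    rw [List.getElem_take]
    simp only [decide_eq_true_eq]
    rw [List.length_take] at hj
    have := hl.rel_get_of_le (a := ⟨j, by omega⟩) (b := ⟨i, hi⟩) (by simp; omega)
    simpa using this
  have hlen : (l.take (i+1)).length = i + 1 := by rw [List.length_take]; omega
  calc i + 1 = (l.take (i+1)).countP (fun y => decide (y ≤ l[i])) := by rw [hall, hlen]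
    _ ≤ l.countP _ := hpref.countP_le

private lemma sorted_getElem_le {l : List ℝ} (hl : l.Pairwise (· ≤ ·)) {i : ℕ}
    (hi : i < l.length) {x : ℝ}
    (hc : i + 1 ≤ l.countP (fun y => decide (y ≤ x))) : l[i] ≤ x := by
  by_contra hx
  push_neg at hx
  have hdrop : (l.drop i).countP (fun y => decide (y ≤ x)) = 0 := by
    rw [List.countP_eq_zero]
    intro y hy
    obtain ⟨j, hj, rfl⟩ := List.getElem_of_mem hy
    rw [List.getElem_drop]
    simp only [decide_eq_true_eq, not_le]
    refine lt_of_lt_of_le hx ?_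
    have : i + j < l.length := by rw [List.length_drop] at hj; omega
    have h2 := hl.rel_get_of_le (a := ⟨i, hi⟩) (b := ⟨i + j, this⟩) (by simp)
    simpa using h2
  have hsplit := l.take_append_drop i
  have hcount : l.countP (fun y => decide (y ≤ x)) ≤ i := by
    conv_lhs => rw [← hsplit]
    rw [List.countP_append, hdrop, Nat.add_zero]
    calc (l.take i).countP _ ≤ (l.take i).length := List.countP_le_length
      _ ≤ i := by rw [List.length_take]; omega
  omega

private lemma countP_mono_mem {α : Type*} (s : Multiset α) (p q : α → Prop)
    [DecidablePred p] [DecidablePred q] (h : ∀ x ∈ s, p x → q x) :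
    Multiset.countP p s ≤ Multiset.countP q s := by
  induction s using Quot.inductionOn with
  | _ l =>
    show Multiset.countP p ↑l ≤ Multiset.countP q ↑l
    rw [Multiset.coe_countP, Multiset.coe_countP]
    refine List.countP_mono_left fun x hx hpx => ?_
    simp only [decide_eq_true_eq] at hpx ⊢
    exact h x (by simpa using hx) hpx

private lemma sort_map_le {α : Type*} (u : Multiset α) (a b : α → ℝ) (δ : ℝ)
    (h : ∀ x ∈ u, a x ≤ b x + δ) {i : ℕ} (hi : i < Multiset.card u) :
    ((u.map a).sort (· ≤ ·))[i]! ≤ ((u.map b).sort (· ≤ ·))[i]! + δ := by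
  set la := (u.map a).sort (· ≤ ·) with hla
  set lb := (u.map b).sort (· ≤ ·) with hlb
  have hia : i < la.length := by rw [hla, Multiset.length_sort]; simpa using hi
  have hib : i < lb.length := by rw [hlb, Multiset.length_sort]; simpa using hi
  rw [getElem!_pos la i hia, getElem!_pos lb i hib]
  set y := lb[i] with hy
  have h1 : i + 1 ≤ lb.countP (fun z => decide (z ≤ y)) :=
    countP_take_ge (Multiset.pairwise_sort _ _) hib
  have hcoe_b : (lb : Multiset ℝ) = u.map b := Multiset.sort_eq _ _
  have h2 : lb.countP (fun z => decide (z ≤ y)) = Multiset.countP (fun z => z ≤ y) (u.map b) := by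
    rw [← Multiset.coe_countP, hcoe_b]
  have h3 : Multiset.countP (fun z => z ≤ y) (u.map b)
      = Multiset.card (u.filter (fun x => b x ≤ y)) := by
    rw [Multiset.countP_map]
  have h4 : Multiset.card (u.filter (fun x => b x ≤ y))
      ≤ Multiset.card (u.filter (fun x => a x ≤ y + δ)) := by
    rw [← Multiset.countP_eq_card_filter, ← Multiset.countP_eq_card_filter]
    exact countP_mono_mem u _ _ fun x hx hbx => le_trans (h x hx) (by linarith)
  have hcoe_a : (la : Multiset ℝ) = u.map a := Multiset.sort_eq _ _
  have h5 : la.countP (fun z => decide (z ≤ y + δ))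
      = Multiset.card (u.filter (fun x => a x ≤ y + δ)) := by
    rw [← Multiset.coe_countP, hcoe_a, Multiset.countP_map]
  have h6 : i + 1 ≤ la.countP (fun z => decide (z ≤ y + δ)) := by omega
  exact sorted_getElem_le (Multiset.pairwise_sort _ _) hia h6

/-- The row of `p` in `PDD(T; k)`: the sorted vector of the `k` smallest distances from
`p` to the other points of `T`, viewed as a point of `ℝᵏ` with the `L∞` metric. -/
noncomputable def row {X : Type*} [MetricSpace X] [DecidableEq X]
    (k : ℕ) (T : Finset X) (p : X) : Fin k → ℝ :=
  fun i => (sortedDists T p)[(i : ℕ)]!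

/-- The Earth Mover's Distance between the uniformly weighted distributions of
`PDD` rows of the finite sets `S` and `Q`, rows compared in the `L∞` metric on `ℝᵏ`. -/
noncomputable def PDDdist {X : Type*} [MetricSpace X] [DecidableEq X]
    (k : ℕ) (S Q : Finset X) : ℝ :=
  sInf {s | ∃ f : X → X → ℝ, (∀ p q, 0 ≤ f p q) ∧
    (∀ p ∈ S, ∑ q ∈ Q, f p q = 1 / S.card) ∧
    (∀ q ∈ Q, ∑ p ∈ S, f p q = 1 / Q.card) ∧
    s = ∑ p ∈ S, ∑ q ∈ Q, f p q * dist (row k S p) (row k Q q)}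

/-- Local Novelty Distance of `S` with respect to a finite dataset `D`. -/
noncomputable def LND {X : Type*} [MetricSpace X] [DecidableEq X]
    (k : ℕ) (S : Finset X) (D : Finset (Finset X)) : ℝ :=
  sInf {d | ∃ Q ∈ D, d = PDDdist k S Q}

/-- Local Novelty Distance upper bound (finite version): if `S` is obtained from some
`Q` in the dataset `D` by perturbing every point by at most `ε`, where `2ε` is less than
the minimum inter-point distance of `Q`, then `LND(S; D) ≤ 2ε`. -/
theorem LND_upper_bound {n : ℕ} (m k : ℕ) (hm : k + 1 ≤ m)
    (D : Finset (Finset (EuclideanSpace ℝ (Fin n))))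
    (hcard : ∀ T ∈ D, T.card = m)
    (Q : Finset (EuclideanSpace ℝ (Fin n))) (hQ : Q ∈ D)
    (S : Finset (EuclideanSpace ℝ (Fin n))) (hScard : S.card = m)
    (f : EuclideanSpace ℝ (Fin n) → EuclideanSpace ℝ (Fin n))
    (hf : Set.InjOn f ↑Q) (hS : S = Q.image f)
    (ε : ℝ) (hε : 0 ≤ ε) (hmove : ∀ q ∈ Q, dist q (f q) ≤ ε)
    (hsep : ∀ q₁ ∈ Q, ∀ q₂ ∈ Q, q₁ ≠ q₂ → 2 * ε < dist q₁ q₂) :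
    LND k S D ≤ 2 * ε := by
  have hm0 : 0 < m := by omega
  have hQcard : Q.card = m := hcard Q hQ
  -- Step 1: row distance bound
  have key : ∀ q ∈ Q, dist (row k S (f q)) (row k Q q) ≤ 2 * ε := by
    intro q hq
    have herase : S.erase (f q) = (Q.erase q).image f := by
      ext x
      simp only [Finset.mem_erase, hS, Finset.mem_image]
      constructor
      · rintro ⟨hne, a, ha, rfl⟩
        exact ⟨a, ⟨fun h => hne (by rw [h]), ha⟩, rfl⟩
      · rintro ⟨a, ⟨hane, haQ⟩, rfl⟩
        exact ⟨fun h => hane (hf haQ hq h), a, haQ, rfl⟩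
    have hval : (S.erase (f q)).val = (Q.erase q).val.map f := by
      rw [herase]
      exact Finset.image_val_of_injOn (hf.mono (by simpa using Finset.erase_subset q Q))
    set u := (Q.erase q).val with hu
    have hcardu : Multiset.card u = m - 1 := by
      have : (Q.erase q).card = m - 1 := by rw [Finset.card_erase_of_mem hq, hQcard]
      rw [hu]; exact this
    have hSrow : sortedDists S (f q) = (u.map (fun x => dist (f q) (f x))).sort (· ≤ ·) := by
      unfold sortedDists
      rw [hval, Multiset.map_map]
      rfl
    have hQrow : sortedDists Q q = (u.map (fun x => dist q x)).sort (· ≤ ·) := rfl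
    rw [dist_pi_le_iff (by positivity)]
    intro i
    have hik : (i : ℕ) < Multiset.card u := by rw [hcardu]; omega
    have hmemQ : ∀ x ∈ u, x ∈ Q := fun x hx => (Finset.mem_erase.mp hx).2
    have hb1 : ∀ x ∈ u, (fun x => dist (f q) (f x)) x ≤ (fun x => dist q x) x + 2 * ε := by
      intro x hx
      have h1 := hmove q hq
      have h2 := hmove x (hmemQ x hx)
      simp only
      calc dist (f q) (f x) ≤ dist (f q) q + dist q x + dist x (f x) := dist_triangle4 _ _ _ _
        _ ≤ dist q x + 2 * ε := by rw [dist_comm (f q) q]; linarith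
    have hb2 : ∀ x ∈ u, (fun x => dist q x) x ≤ (fun x => dist (f q) (f x)) x + 2 * ε := by
      intro x hx
      have h1 := hmove q hq
      have h2 := hmove x (hmemQ x hx)
      simp only
      calc dist q x ≤ dist q (f q) + dist (f q) (f x) + dist (f x) x := dist_triangle4 _ _ _ _
        _ ≤ dist (f q) (f x) + 2 * ε := by rw [dist_comm (f x) x]; linarith
    have e1 := sort_map_le u _ _ (2 * ε) hb1 hik
    have e2 := sort_map_le u _ _ (2 * ε) hb2 hik
    have hrS : row k S (f q) i = ((u.map (fun x => dist (f q) (f x))).sort (· ≤ ·))[(i : ℕ)]! := by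
      unfold row; rw [hSrow]
    have hrQ : row k Q q i = ((u.map (fun x => dist q x)).sort (· ≤ ·))[(i : ℕ)]! := by
      unfold row; rw [hQrow]
    rw [Real.dist_eq, abs_sub_le_iff, hrS, hrQ]
    constructor <;> linarith
  -- Step 2: the transport plan
  set g : EuclideanSpace ℝ (Fin n) → EuclideanSpace ℝ (Fin n) → ℝ := fun p q' => if p = f q' then (1 / m : ℝ) else 0 with hg
  have hmne : (m : ℝ) ≠ 0 := Nat.cast_ne_zero.mpr hm0.ne'
  have hg0 : ∀ p q', 0 ≤ g p q' := by
    intro p q'; rw [hg]; dsimp only; split <;> positivity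
  have hrow1 : ∀ p ∈ S, ∑ q' ∈ Q, g p q' = 1 / S.card := by
    intro p hp
    rw [hS] at hp
    obtain ⟨q₀, hq₀, rfl⟩ := Finset.mem_image.mp hp
    rw [Finset.sum_eq_single q₀]
    · rw [hg]; dsimp only; rw [if_pos rfl, hScard]
    · intro q' hq' hne
      rw [hg]; dsimp only; rw [if_neg]
      intro h; exact hne (hf hq' hq₀ h.symm)
    · intro h; exact absurd hq₀ h
  have hrow2 : ∀ q' ∈ Q, ∑ p ∈ S, g p q' = 1 / Q.card := by
    intro q' hq'
    rw [Finset.sum_eq_single (f q')]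
    · rw [hg]; dsimp only; rw [if_pos rfl, hQcard]
    · intro p hp hne; rw [hg]; dsimp only; rw [if_neg hne]
    · intro h
      exact absurd (hS ▸ Finset.mem_image_of_mem f hq') h
  have hPDD : PDDdist k S Q ≤ 2 * ε := by
    unfold PDDdist
    have hbdd : BddBelow {s | ∃ f' : EuclideanSpace ℝ (Fin n) → EuclideanSpace ℝ (Fin n) → ℝ, (∀ p q : EuclideanSpace ℝ (Fin n), 0 ≤ f' p q) ∧
        (∀ p ∈ S, ∑ q ∈ Q, f' p q = 1 / S.card) ∧
        (∀ q ∈ Q, ∑ p ∈ S, f' p q = 1 / Q.card) ∧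
        s = ∑ p ∈ S, ∑ q ∈ Q, f' p q * dist (row k S p) (row k Q q)} := by
      refine ⟨0, ?_⟩
      rintro s ⟨f', hf0, _, _, rfl⟩
      exact Finset.sum_nonneg fun p _ => Finset.sum_nonneg fun q' _ =>
        mul_nonneg (hf0 _ _) dist_nonneg
    have hmem : (∑ p ∈ S, ∑ q' ∈ Q, g p q' * dist (row k S p) (row k Q q')) ∈
        {s | ∃ f' : EuclideanSpace ℝ (Fin n) → EuclideanSpace ℝ (Fin n) → ℝ, (∀ p q : EuclideanSpace ℝ (Fin n), 0 ≤ f' p q) ∧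
        (∀ p ∈ S, ∑ q ∈ Q, f' p q = 1 / S.card) ∧
        (∀ q ∈ Q, ∑ p ∈ S, f' p q = 1 / Q.card) ∧
        s = ∑ p ∈ S, ∑ q ∈ Q, f' p q * dist (row k S p) (row k Q q)} :=
      ⟨g, hg0, hrow1, hrow2, rfl⟩
    refine le_trans (csInf_le hbdd hmem) ?_
    calc ∑ p ∈ S, ∑ q' ∈ Q, g p q' * dist (row k S p) (row k Q q')
        ≤ ∑ p ∈ S, ∑ q' ∈ Q, g p q' * (2 * ε) := by
          refine Finset.sum_le_sum fun p hp => Finset.sum_le_sum fun q' hq' => ?_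
          rw [hg]; dsimp only
          split
          · next h => rw [h]; exact mul_le_mul_of_nonneg_left (key q' hq') (by positivity)
          · simp
      _ = ∑ p ∈ S, (1 / (S.card : ℝ)) * (2 * ε) := by
          refine Finset.sum_congr rfl fun p hp => ?_
          rw [← Finset.sum_mul, hrow1 p hp]
      _ = 2 * ε := by
          rw [Finset.sum_const, nsmul_eq_mul, hScard]
          field_simp
  -- Step 3: LND ≤ PDDdist
  have hLND : LND k S D ≤ PDDdist k S Q := by
    unfold LND
    apply csInf_le
    · refine ⟨0, ?_⟩
      rintro d ⟨Q', _, rfl⟩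
      unfold PDDdist
      apply Real.sInf_nonneg
      rintro x ⟨f', hf0, _, _, rfl⟩
      exact Finset.sum_nonneg fun p _ => Finset.sum_nonneg fun q' _ =>
        mul_nonneg (hf0 _ _) dist_nonneg
    · exact ⟨Q, hQ, rfl⟩
  linarith
end

section
/- Local Novelty Distance lower bound (Theorem 1, second part, finite version): with the same definitions, if S is obtained from some Q in the dataset D by perturbing every point of Q by at most ε, then ε ≥ LND(S; D)/2. Equivalently, to produce S from any Q ∈ D, some point of Q must be moved by at least half of LND(S; D). -/
attribute [local instance] Classical.propDecidable

private lemma sorted_rel_aux_s11 (δ : ℝ) : ∀ (N : ℕ) (a b : List ℝ), a.length = N →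
    a.Pairwise (· ≤ ·) → b.Pairwise (· ≤ ·) →
    Multiset.Rel (fun x y => |x - y| ≤ δ) ↑a ↑b →
    List.Forall₂ (fun x y => |x - y| ≤ δ) a b := by
  intro N
  induction N with
  | zero =>
    intro a b ha _ _ hrel
    match a with
    | [] =>
      have : (b : Multiset ℝ) = 0 := by simpa using hrel
      have : b = [] := (Multiset.coe_eq_zero b).mp this
      subst this; exact List.Forall₂.nil
    | x :: xs => simp at ha
  | succ N ih =>
    intro a b ha hsa hsb hrel
    match a with
    | [] => simp at ha
    | a0 :: a' =>
      have hrel' : Multiset.Rel (fun x y => |x - y| ≤ δ) (a0 ::ₘ ↑a') ↑b := by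
        simpa using hrel
      rcases Multiset.rel_cons_left.mp hrel' with ⟨b1, bs, hR, hRel, ht⟩
      match b with
      | [] => simp at ht
      | b0 :: b' =>
        have ht' : (b0 ::ₘ (↑b' : Multiset ℝ)) = b1 ::ₘ bs := by simpa using ht
        have ha' : a'.length = N := by simpa using ha
        have hsa' : a'.Pairwise (· ≤ ·) := hsa.of_cons
        have hsb' : b'.Pairwise (· ≤ ·) := hsb.of_cons
        rcases Multiset.cons_eq_cons.mp ht' with ⟨hb, hbs⟩ | ⟨hne, cs, hb', hbs⟩
        · subst hb
          refine List.Forall₂.cons hR (ih a' b' ha' hsa' hsb' ?_)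
          rw [← hbs] at hRel; exact hRel
        · rw [hbs] at hRel
          rcases Multiset.rel_cons_right.mp hRel with ⟨a1, as, hR1, hRel2, has⟩
          have ha1mem : a1 ∈ a' := by
            have : a1 ∈ (↑a' : Multiset ℝ) := has ▸ Multiset.mem_cons_self _ _
            simpa using this
          have hb1mem : b1 ∈ b' := by
            have : b1 ∈ (↑b' : Multiset ℝ) := hb' ▸ Multiset.mem_cons_self _ _
            simpa using this
          have ha01 : a0 ≤ a1 := (List.pairwise_cons.mp hsa).1 a1 ha1mem
          have hb01 : b0 ≤ b1 := (List.pairwise_cons.mp hsb).1 b1 hb1mem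
          have hR00 : |a0 - b0| ≤ δ := by
            rw [abs_le]; constructor <;> linarith [abs_le.mp hR, abs_le.mp hR1]
          have hR11 : |a1 - b1| ≤ δ := by
            rw [abs_le]; constructor <;> linarith [abs_le.mp hR, abs_le.mp hR1]
          refine List.Forall₂.cons hR00 (ih a' b' ha' hsa' hsb' ?_)
          rw [show ((a' : Multiset ℝ)) = a1 ::ₘ as from has,
            show ((b' : Multiset ℝ)) = b1 ::ₘ cs from hb']
          exact Multiset.Rel.cons hR11 hRel2

private lemma sorted_rel (δ : ℝ) (s t : Multiset ℝ)
    (h : Multiset.Rel (fun x y => |x - y| ≤ δ) s t) :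
    List.Forall₂ (fun x y => |x - y| ≤ δ) (s.sort (· ≤ ·)) (t.sort (· ≤ ·)) := by
  refine sorted_rel_aux_s11 δ _ _ _ rfl (Multiset.pairwise_sort _ _) (Multiset.pairwise_sort _ _) ?_
  rwa [Multiset.sort_eq, Multiset.sort_eq]

private lemma rel_map_same {α : Type*} (R : ℝ → ℝ → Prop) (g h : α → ℝ) :
    ∀ (s : Multiset α), (∀ x ∈ s, R (g x) (h x)) → Multiset.Rel R (s.map g) (s.map h) := by
  intro s
  induction s using Multiset.induction_on with
  | empty => simp
  | cons a s ih =>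
    intro hx
    simp only [Multiset.map_cons]
    exact Multiset.Rel.cons (hx a (Multiset.mem_cons_self a s))
      (ih fun x hxs => hx x (Multiset.mem_cons_of_mem hxs))

/-- Local Novelty Distance lower bound (finite version): if `S` is obtained from some
`Q` in the dataset `D` by perturbing every point by at most `ε`, where `ε` is smaller than
the packing radius of `Q` (half the minimum inter-point distance), then `ε ≥ LND(S; D)/2`,
i.e. some point of `Q` must be moved by at least half of `LND(S; D)`. -/
theorem LND_lower_bound {n : ℕ} (m k : ℕ) (hm : k + 1 ≤ m)
    (D : Finset (Finset (EuclideanSpace ℝ (Fin n))))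
    (hcard : ∀ T ∈ D, T.card = m)
    (Q : Finset (EuclideanSpace ℝ (Fin n))) (hQ : Q ∈ D)
    (S : Finset (EuclideanSpace ℝ (Fin n))) (hScard : S.card = m)
    (f : EuclideanSpace ℝ (Fin n) → EuclideanSpace ℝ (Fin n))
    (hf : Set.InjOn f ↑Q) (hS : S = Q.image f)
    (ε : ℝ) (hε : 0 ≤ ε) (hmove : ∀ q ∈ Q, dist q (f q) ≤ ε)
    (hsep : ∀ q₁ ∈ Q, ∀ q₂ ∈ Q, q₁ ≠ q₂ → ε < dist q₁ q₂ / 2) :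
    LND k S D / 2 ≤ ε := by
  have hQcard : Q.card = m := hcard Q hQ
  have hm0 : 0 < m := by omega
  -- rows of matched points are close
  have hrow : ∀ q ∈ Q, dist (row k S (f q)) (row k Q q) ≤ 2 * ε := by
    intro q hq
    have hfq : f q ∈ S := hS ▸ Finset.mem_image_of_mem f hq
    have herase : S.erase (f q) = (Q.erase q).image f := by
      subst hS
      ext x
      simp only [Finset.mem_erase, Finset.mem_image]
      constructor
      · rintro ⟨hne, y, hy, rfl⟩
        exact ⟨y, ⟨fun h => hne (by rw [h]), hy⟩, rfl⟩
      · rintro ⟨y, ⟨hyne, hy⟩, rfl⟩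
        exact ⟨fun h => hyne (hf hy hq h), y, hy, rfl⟩
    have hval : (S.erase (f q)).val = (Q.erase q).val.map f := by
      rw [herase]
      exact Finset.image_val_of_injOn
        (hf.mono (Finset.coe_subset.mpr (Finset.erase_subset _ _)))
    have hmeq : (S.erase (f q)).val.map (dist (f q))
        = (Q.erase q).val.map (fun x => dist (f q) (f x)) := by
      rw [hval, Multiset.map_map]; rfl
    have hRel : Multiset.Rel (fun x y => |x - y| ≤ 2 * ε)
        ((S.erase (f q)).val.map (dist (f q))) ((Q.erase q).val.map (dist q)) := by
      rw [hmeq]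
      apply rel_map_same
      intro x hx
      have hxQ : x ∈ Q := Finset.mem_of_mem_erase hx
      have h1 := dist_dist_dist_le (f q) (f x) q x
      rw [Real.dist_eq] at h1
      have h2 : dist (f q) q ≤ ε := by rw [dist_comm]; exact hmove q hq
      have h3 : dist (f x) x ≤ ε := by rw [dist_comm]; exact hmove x hxQ
      calc |dist (f q) (f x) - dist q x| ≤ dist (f q) q + dist (f x) x := h1
        _ ≤ 2 * ε := by linarith
    have hF : List.Forall₂ (fun x y => |x - y| ≤ 2 * ε)
        (sortedDists S (f q)) (sortedDists Q q) := sorted_rel _ _ _ hRel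
    have len1 : (sortedDists S (f q)).length = m - 1 := by
      simp only [sortedDists, Multiset.length_sort, Multiset.card_map]
      exact (by rw [Finset.card_erase_of_mem hfq, hScard] :
        (S.erase (f q)).card = m - 1)
    have len2 : (sortedDists Q q).length = m - 1 := by
      simp only [sortedDists, Multiset.length_sort, Multiset.card_map]
      exact (by rw [Finset.card_erase_of_mem hq, hQcard] :
        (Q.erase q).card = m - 1)
    rw [dist_pi_le_iff (by positivity)]
    intro i
    have hik : (i : ℕ) < m - 1 := by omega
    have h1 : (i : ℕ) < (sortedDists S (f q)).length := by omega
    have h2 : (i : ℕ) < (sortedDists Q q).length := by omega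
    have := hF.get h1 h2
    have e1 : (sortedDists S (f q))[(i : ℕ)]! = (sortedDists S (f q))[(i : ℕ)] :=
      getElem!_pos (sortedDists S (f q)) (i : ℕ) h1
    have e2 : (sortedDists Q q)[(i : ℕ)]! = (sortedDists Q q)[(i : ℕ)] :=
      getElem!_pos (sortedDists Q q) (i : ℕ) h2
    simp only [row, Real.dist_eq, e1, e2]
    simpa using this
  -- the transport plan induced by f
  set F : EuclideanSpace ℝ (Fin n) → EuclideanSpace ℝ (Fin n) → ℝ :=
    fun p q' => if q' ∈ Q ∧ p = f q' then (1 : ℝ) / m else 0 with hF_def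
  have hF0 : ∀ p q', 0 ≤ F p q' := by
    intro p q'; dsimp [F]; split <;> positivity
  have hrowsum : ∀ p ∈ S, ∑ q' ∈ Q, F p q' = 1 / (S.card : ℝ) := by
    intro p hp
    rw [hS] at hp
    rcases Finset.mem_image.mp hp with ⟨q0, hq0, rfl⟩
    have : ∀ q' ∈ Q, F (f q0) q' = if q' = q0 then (1 : ℝ) / m else 0 := by
      intro q' hq'
      dsimp [F]
      congr 1
      simp only [eq_iff_iff]
      constructor
      · rintro ⟨_, h⟩; exact hf hq' hq0 h.symm
      · rintro rfl; exact ⟨hq', rfl⟩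
    rw [Finset.sum_congr rfl this, Finset.sum_ite_eq' Q q0 (fun _ => (1 : ℝ) / m),
      if_pos hq0, hScard]
  have hcolsum : ∀ q' ∈ Q, ∑ p ∈ S, F p q' = 1 / (Q.card : ℝ) := by
    intro q' hq'
    have : ∀ p ∈ S, F p q' = if p = f q' then (1 : ℝ) / m else 0 := by
      intro p _
      dsimp [F]
      congr 1
      simp [hq']
    rw [Finset.sum_congr rfl this, Finset.sum_ite_eq' S (f q') (fun _ => (1 : ℝ) / m),
      if_pos (hS ▸ Finset.mem_image_of_mem f hq'), hQcard]
  have hPDD_nonneg : ∀ Q' : Finset (EuclideanSpace ℝ (Fin n)), 0 ≤ PDDdist k S Q' := by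
    intro Q'
    apply Real.sInf_nonneg
    rintro s ⟨g, hg0, -, -, rfl⟩
    apply Finset.sum_nonneg; intro p _
    apply Finset.sum_nonneg; intro q' _
    exact mul_nonneg (hg0 _ _) dist_nonneg
  have hPDD_le : PDDdist k S Q ≤ 2 * ε := by
    have hmem : (∑ p ∈ S, ∑ q' ∈ Q, F p q' * dist (row k S p) (row k Q q')) ∈
        {s | ∃ g : EuclideanSpace ℝ (Fin n) → EuclideanSpace ℝ (Fin n) → ℝ,
          (∀ p q, 0 ≤ g p q) ∧
          (∀ p ∈ S, ∑ q ∈ Q, g p q = 1 / S.card) ∧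
          (∀ q ∈ Q, ∑ p ∈ S, g p q = 1 / Q.card) ∧
          s = ∑ p ∈ S, ∑ q ∈ Q, g p q * dist (row k S p) (row k Q q)} :=
      ⟨F, hF0, hrowsum, hcolsum, rfl⟩
    have hbdd : BddBelow {s | ∃ g : EuclideanSpace ℝ (Fin n) → EuclideanSpace ℝ (Fin n) → ℝ,
          (∀ p q, 0 ≤ g p q) ∧
          (∀ p ∈ S, ∑ q ∈ Q, g p q = 1 / S.card) ∧
          (∀ q ∈ Q, ∑ p ∈ S, g p q = 1 / Q.card) ∧
          s = ∑ p ∈ S, ∑ q ∈ Q, g p q * dist (row k S p) (row k Q q)} := by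
      refine ⟨0, ?_⟩
      rintro s ⟨g, hg0, -, -, rfl⟩
      apply Finset.sum_nonneg; intro p _
      apply Finset.sum_nonneg; intro q' _
      exact mul_nonneg (hg0 _ _) dist_nonneg
    have h1 : PDDdist k S Q ≤
        ∑ p ∈ S, ∑ q' ∈ Q, F p q' * dist (row k S p) (row k Q q') :=
      csInf_le hbdd hmem
    have h2 : ∑ p ∈ S, ∑ q' ∈ Q, F p q' * dist (row k S p) (row k Q q') ≤
        ∑ p ∈ S, ∑ q' ∈ Q, F p q' * (2 * ε) := by
      apply Finset.sum_le_sum; intro p _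
      apply Finset.sum_le_sum; intro q' _
      by_cases h : q' ∈ Q ∧ p = f q'
      · rcases h with ⟨hq', rfl⟩
        exact mul_le_mul_of_nonneg_left (hrow q' hq') (hF0 _ _)
      · simp [F, h]
    have h3 : ∑ p ∈ S, ∑ q' ∈ Q, F p q' * (2 * ε) = 2 * ε := by
      simp_rw [← Finset.sum_mul]
      have : ∀ p ∈ S, (∑ q' ∈ Q, F p q') = 1 / (m : ℝ) := by
        intro p hp; rw [hrowsum p hp, hScard]
      rw [Finset.sum_congr rfl this]
      rw [Finset.sum_const, hScard, nsmul_eq_mul]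
      field_simp
    linarith
  have hLND_le : LND k S D ≤ PDDdist k S Q := by
    apply csInf_le
    · refine ⟨0, ?_⟩
      rintro d ⟨Q', _, rfl⟩
      exact hPDD_nonneg Q'
    · exact ⟨Q, hQ, rfl⟩
  linarith
end

section
/- AMD perturbation stability (finite version): if S is obtained from a finite m-point set Q ⊂ ℝⁿ by perturbing every point by at most ε (via a bijection), then for every k ≤ m−1, |AMD_k(S) − AMD_k(Q)| ≤ 2ε, and hence L∞(AMD(S;k), AMD(Q;k)) ≤ 2ε for the vectors of the first k averaged minimum distances. -/
attribute [local instance] Classical.propDecidable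

/-- `AMD` (Average Minimum Distance): the mean over `p ∈ T` of the `i`-th smallest
distance from `p` to the other points of `T` (zero-based index `i`). -/
noncomputable def AMD {X : Type*} [MetricSpace X] [DecidableEq X]
    (T : Finset X) (i : ℕ) : ℝ :=
  (∑ p ∈ T, (sortedDists T p)[i]!) / T.card

lemma rel_countP_le {r : ℝ → ℝ → Prop} {p q : ℝ → Prop} {s t : Multiset ℝ}
    (h : Multiset.Rel r s t) (hpq : ∀ a b, r a b → p a → q b) :
    s.countP p ≤ t.countP q := by
  induction h with
  | zero => simp
  | @cons a b s t hab _ ih =>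
      rw [Multiset.countP_cons, Multiset.countP_cons]
      by_cases hp : p a
      · have : q b := hpq a b hab hp
        simp only [hp, this, if_true]; omega
      · simp only [hp, if_false]; omega

lemma sorted_get_mono {l : List ℝ} (hl : l.Pairwise (· ≤ ·)) {j i : ℕ}
    (hj : j ≤ i) (hi : i < l.length) : l[j]'(lt_of_le_of_lt hj hi) ≤ l[i] := by
  rcases eq_or_lt_of_le hj with rfl | h
  · exact le_refl _
  · exact hl.rel_get_of_lt h

lemma sorted_countP_ge {l : List ℝ} (hl : l.Pairwise (· ≤ ·)) {i : ℕ} (hi : i < l.length)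
    {x : ℝ} (hx : l[i] ≤ x) : i + 1 ≤ l.countP (fun a => a ≤ x) := by
  have hlen : (l.take (i+1)).length = i + 1 := by
    rw [List.length_take]; omega
  have hall : ∀ a ∈ l.take (i+1), (fun a => decide (a ≤ x)) a = true := by
    intro a ha
    obtain ⟨j, hjl, hj⟩ := List.getElem_of_mem ha
    rw [List.getElem_take] at hj
    rw [hlen] at hjl
    have : l[j]'(by omega) ≤ l[i] := sorted_get_mono hl (by omega) hi
    simp only [decide_eq_true_eq]
    rw [← hj]; exact this.trans hx
  calc i + 1 = (l.take (i+1)).countP (fun a => decide (a ≤ x)) := by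
        rw [List.countP_eq_length.mpr hall, hlen]
    _ ≤ l.countP (fun a => decide (a ≤ x)) := by
        conv_rhs => rw [← List.take_append_drop (i+1) l]
        rw [List.countP_append]; omega

lemma sorted_countP_le {l : List ℝ} (hl : l.Pairwise (· ≤ ·)) {i : ℕ} (hi : i < l.length)
    {x : ℝ} (hcount : i + 1 ≤ l.countP (fun a => a ≤ x)) : l[i] ≤ x := by
  by_contra hgt
  push_neg at hgt
  have hdrop : (l.drop i).countP (fun a => decide (a ≤ x)) = 0 := by
    rw [List.countP_eq_zero]
    intro a ha
    obtain ⟨j, hjl, hj⟩ := List.getElem_of_mem ha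
    rw [List.getElem_drop] at hj
    rw [List.length_drop] at hjl
    have : l[i] ≤ l[i + j]'(by omega) := sorted_get_mono hl (by omega) (by omega)
    simp only [decide_eq_true_eq, not_le]
    rw [← hj]; linarith
  have : l.countP (fun a => decide (a ≤ x)) ≤ i := by
    conv_lhs => rw [← List.take_append_drop i l]
    rw [List.countP_append, hdrop]
    have := List.countP_le_length (l := l.take i) (p := fun a => decide (a ≤ x))
    rw [List.length_take] at this
    omega
  omega

lemma sort_le_of_rel {δ : ℝ} {s t : Multiset ℝ}
    (h : Multiset.Rel (fun a b => |a - b| ≤ δ) s t) {i : ℕ} (hi : i < Multiset.card s) :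
    (t.sort (· ≤ ·))[i]'(by rw [Multiset.length_sort, ← Multiset.card_eq_card_of_rel h]; exact hi)
      ≤ (s.sort (· ≤ ·))[i]'(by rw [Multiset.length_sort]; exact hi) + δ := by
  have hls : i < (s.sort (· ≤ ·)).length := by rw [Multiset.length_sort]; exact hi
  have hlt : i < (t.sort (· ≤ ·)).length := by
    rw [Multiset.length_sort, ← Multiset.card_eq_card_of_rel h]; exact hi
  set x := (s.sort (· ≤ ·))[i] with hx
  have c1 : i + 1 ≤ (s.sort (· ≤ ·)).countP (fun a => a ≤ x) :=
    sorted_countP_ge (Multiset.pairwise_sort _ _) hls le_rfl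
  have hcs : (s.sort (· ≤ ·)).countP (fun a => a ≤ x) = s.countP (fun a => a ≤ x) := by
    rw [← Multiset.sort_eq s (· ≤ ·), Multiset.coe_countP]
    simp
  have hct : (t.sort (· ≤ ·)).countP (fun a => a ≤ x + δ) = t.countP (fun a => a ≤ x + δ) := by
    rw [← Multiset.sort_eq t (· ≤ ·), Multiset.coe_countP]
    simp
  have c2 : s.countP (fun a => a ≤ x) ≤ t.countP (fun a => a ≤ x + δ) := by
    refine rel_countP_le h ?_
    intro a b hab ha
    have := abs_sub_le_iff.mp hab
    linarith
  have c3 : i + 1 ≤ (t.sort (· ≤ ·)).countP (fun a => a ≤ x + δ) := by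
    rw [hct]; rw [hcs] at c1; omega
  exact sorted_countP_le (Multiset.pairwise_sort _ _) hlt c3

lemma abs_sort_sub_le {δ : ℝ} (hδ : 0 ≤ δ) {s t : Multiset ℝ}
    (h : Multiset.Rel (fun a b => |a - b| ≤ δ) s t) {i : ℕ} (hi : i < Multiset.card s) :
    |(s.sort (· ≤ ·))[i]! - (t.sort (· ≤ ·))[i]!| ≤ δ := by
  have hcard := Multiset.card_eq_card_of_rel h
  have hls : i < (s.sort (· ≤ ·)).length := by rw [Multiset.length_sort]; exact hi
  have hlt : i < (t.sort (· ≤ ·)).length := by rw [Multiset.length_sort, ← hcard]; exact hi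
  have h1 := sort_le_of_rel h hi
  have h' : Multiset.Rel (fun a b => |a - b| ≤ δ) t s := by
    rw [← Multiset.rel_flip] at h
    exact h.mono (fun a _ b _ hab => by rw [abs_sub_comm]; exact hab)
  have h2 := sort_le_of_rel h' (by rw [← hcard]; exact hi)
  rw [getElem!_pos _ i hls, getElem!_pos _ i hlt, abs_sub_le_iff]
  constructor <;> linarith [h1, h2]

/-- AMD perturbation stability (finite version): if `S` is obtained from an `m`-point set
`Q ⊂ ℝⁿ` by perturbing every point by at most `ε` (via a bijection), then each of the first
`m - 1` averaged minimum distances changes by at most `2ε`; hence the `L∞` distance between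
the corresponding `AMD` vectors of length `k ≤ m - 1` is at most `2ε`. -/
theorem AMD_perturbation_stability {n : ℕ} (m : ℕ)
    (Q S : Finset (EuclideanSpace ℝ (Fin n))) (hQcard : Q.card = m)
    (f : EuclideanSpace ℝ (Fin n) → EuclideanSpace ℝ (Fin n))
    (hf : Set.InjOn f ↑Q) (hS : S = Q.image f)
    (ε : ℝ) (hε : 0 ≤ ε) (hmove : ∀ q ∈ Q, dist q (f q) ≤ ε) :
    (∀ i < m - 1, |AMD S i - AMD Q i| ≤ 2 * ε) ∧
    (∀ k : ℕ, 0 < k → k ≤ m - 1 →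
      dist (fun j : Fin k => AMD S (j : ℕ)) (fun j : Fin k => AMD Q (j : ℕ)) ≤ 2 * ε) := by
  have hSval : S.val = Q.val.map f := by rw [hS, Finset.image_val_of_injOn hf]
  have hScard : S.card = m := by
    rw [hS, Finset.card_image_of_injOn hf, hQcard]
  have key : ∀ i < m - 1, ∀ p ∈ Q,
      |(sortedDists Q p)[i]! - (sortedDists S (f p))[i]!| ≤ 2 * ε := by
    intro i hi p hp
    have hpv : p ∈ Q.val := hp
    have hSe : (S.erase (f p)).val = (Q.val.erase p).map f := by
      rw [Finset.erase_val, hSval]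
      conv_lhs => rw [← Multiset.cons_erase hpv]
      rw [Multiset.map_cons, Multiset.erase_cons_head]
    have hrel : Multiset.Rel (fun a b => |a - b| ≤ 2 * ε)
        ((Q.erase p).val.map (dist p)) ((S.erase (f p)).val.map (dist (f p))) := by
      rw [hSe, Multiset.map_map, Finset.erase_val]
      rw [Multiset.rel_map]
      apply Multiset.rel_refl_of_refl_on
      intro q hq
      have hqQ : q ∈ Q := Multiset.mem_of_mem_erase hq
      have h1 : |dist p q - dist (f p) q| ≤ dist p (f p) := abs_dist_sub_le _ _ _
      have h2 : |dist q (f p) - dist (f q) (f p)| ≤ dist q (f q) := abs_dist_sub_le _ _ _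
      have hb1 := hmove p hp
      have hb2 := hmove q hqQ
      rw [dist_comm q (f p), dist_comm (f q) (f p)] at h2
      simp only [Function.comp_apply]
      calc |dist p q - dist (f p) (f q)|
          ≤ |dist p q - dist (f p) q| + |dist (f p) q - dist (f p) (f q)| := abs_sub_le _ _ _
        _ ≤ dist p (f p) + dist q (f q) := by
            apply add_le_add h1 h2
        _ ≤ 2 * ε := by linarith
    have hcard : i < Multiset.card ((Q.erase p).val.map (dist p)) := by
      rw [Multiset.card_map, ← Finset.card_def, Finset.card_erase_of_mem hp, hQcard]
      exact hi
    exact abs_sort_sub_le (by linarith) hrel hcard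
  have part1 : ∀ i < m - 1, |AMD S i - AMD Q i| ≤ 2 * ε := by
    intro i hi
    have hm : 2 ≤ m := by omega
    have hm0 : (0 : ℝ) < (m : ℝ) := by positivity
    have hsum : ∑ p ∈ S, (sortedDists S p)[i]! = ∑ p ∈ Q, (sortedDists S (f p))[i]! := by
      rw [hS, Finset.sum_image (fun x hx y hy h => hf hx hy h)]
    rw [AMD, AMD, hScard, hQcard, hsum, div_sub_div_same, ← Finset.sum_sub_distrib]
    rw [abs_div, abs_of_pos hm0, div_le_iff₀ hm0]
    calc |∑ p ∈ Q, ((sortedDists S (f p))[i]! - (sortedDists Q p)[i]!)|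
        ≤ ∑ p ∈ Q, |(sortedDists S (f p))[i]! - (sortedDists Q p)[i]!| :=
          Finset.abs_sum_le_sum_abs _ _
      _ ≤ ∑ _p ∈ Q, 2 * ε := by
          apply Finset.sum_le_sum
          intro p hp
          rw [abs_sub_comm]
          exact key i hi p hp
      _ = 2 * ε * m := by rw [Finset.sum_const, hQcard, nsmul_eq_mul]; ring
  refine ⟨part1, ?_⟩
  intro k hk hkm
  rw [dist_pi_le_iff (by positivity)]
  intro j
  rw [Real.dist_eq]
  exact part1 j (by have := j.isLt; omega)
end
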